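/- Let M = [[x_0,y_1,y_0,2,2,1],[y_1,x_1,1,2,1,2],[y_0,1,x_2,1,2,2],[2,2,1,x_3,2,1],[2,1,2,2,x_4,1],[1,2,2,1,1,x_5]] over ℤ[x_0,…,x_5,y_0,y_1]. Then det of the submatrix with rows {2,3,4} and columns {1,2,5} equals 5 - x_2, det with rows {2,4,5} and columns {1,2,3} equals 3x_2 - 4, and det with rows {0,1,2} and columns {3,4,5} equals -5; consequently the ideal generated by all 3×3 minors of M is the unit ideal. -/

import Mathlib

open MvPolynomial

theorem vec6_five {α : Type*} (a b c d e : α) (g : Fin 1 → α) :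
    Matrix.vecCons a (Matrix.vecCons b (Matrix.vecCons c (Matrix.vecCons d (Matrix.vecCons e g)))) (5 : Fin 6) = g 0 := rfl

noncomputable def Maux6 : Matrix (Fin 6) (Fin 6) (MvPolynomial (Fin 8) ℤ) :=
  !![X 0, X 7, X 6, 2, 2, 1;
     X 7, X 1, 1, 2, 1, 2;
     X 6, 1, X 2, 1, 2, 2;
     2, 2, 1, X 3, 2, 1;
     2, 1, 2, 2, X 4, 1;
     1, 2, 2, 1, 1, X 5]

theorem stmt_6 :
    letI x : Fin 6 → MvPolynomial (Fin 8) ℤ := fun i => X ⟨i, by omega⟩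
    letI y : Fin 2 → MvPolynomial (Fin 8) ℤ := fun i => X ⟨6 + i, by omega⟩
    letI M : Matrix (Fin 6) (Fin 6) (MvPolynomial (Fin 8) ℤ) :=
      !![x 0, y 1, y 0, 2, 2, 1;
         y 1, x 1, 1, 2, 1, 2;
         y 0, 1, x 2, 1, 2, 2;
         2, 2, 1, x 3, 2, 1;
         2, 1, 2, 2, x 4, 1;
         1, 2, 2, 1, 1, x 5]
    (M.submatrix (![2, 3, 4] : Fin 3 → Fin 6) (![1, 2, 5] : Fin 3 → Fin 6)).det = 5 - x 2 ∧
    (M.submatrix (![2, 4, 5] : Fin 3 → Fin 6) (![1, 2, 3] : Fin 3 → Fin 6)).det = 3 * x 2 - 4 ∧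
    (M.submatrix (![0, 1, 2] : Fin 3 → Fin 6) (![3, 4, 5] : Fin 3 → Fin 6)).det = -5 ∧
    Ideal.span {p : MvPolynomial (Fin 8) ℤ | ∃ (r c : Fin 3 → Fin 6),
      Function.Injective r ∧ Function.Injective c ∧ p = (M.submatrix r c).det} = ⊤ := by
  show (Maux6.submatrix ![2, 3, 4] ![1, 2, 5]).det = 5 - X 2 ∧
    (Maux6.submatrix ![2, 4, 5] ![1, 2, 3]).det = 3 * X 2 - 4 ∧
    (Maux6.submatrix ![0, 1, 2] ![3, 4, 5]).det = -5 ∧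
    Ideal.span {p : MvPolynomial (Fin 8) ℤ | ∃ (r c : Fin 3 → Fin 6),
      Function.Injective r ∧ Function.Injective c ∧ p = (Maux6.submatrix r c).det} = ⊤
  have h1 : (Maux6.submatrix ![2, 3, 4] ![1, 2, 5]).det = 5 - X 2 := by
    rw [Matrix.det_fin_three]; simp [Maux6, Matrix.det_fin_three, Matrix.submatrix_apply, Matrix.cons_val_succ,
      vec6_five, Matrix.vecHead, Matrix.vecTail]; ring
  have h2 : (Maux6.submatrix ![2, 4, 5] ![1, 2, 3]).det = 3 * X 2 - 4 := by
    rw [Matrix.det_fin_three]; simp [Maux6, Matrix.det_fin_three, Matrix.submatrix_apply, Matrix.cons_val_succ,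
      vec6_five, Matrix.vecHead, Matrix.vecTail]; ring
  have h3 : (Maux6.submatrix ![0, 1, 2] ![3, 4, 5]).det = -5 := by
    rw [Matrix.det_fin_three]; simp [Maux6, Matrix.det_fin_three, Matrix.submatrix_apply, Matrix.cons_val_succ,
      vec6_five, Matrix.vecHead, Matrix.vecTail]; ring
  refine ⟨h1, h2, h3, ?_⟩
  rw [Ideal.eq_top_iff_one]
  set S : Set (MvPolynomial (Fin 8) ℤ) := {p | ∃ (r c : Fin 3 → Fin 6),
      Function.Injective r ∧ Function.Injective c ∧ p = (Maux6.submatrix r c).det} with hS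
  have m1 : (5 - X 2 : MvPolynomial (Fin 8) ℤ) ∈ Ideal.span S :=
    Ideal.subset_span ⟨![2,3,4], ![1,2,5], by decide, by decide, h1.symm⟩
  have m2 : (3 * X 2 - 4 : MvPolynomial (Fin 8) ℤ) ∈ Ideal.span S :=
    Ideal.subset_span ⟨![2,4,5], ![1,2,3], by decide, by decide, h2.symm⟩
  have m3 : (-5 : MvPolynomial (Fin 8) ℤ) ∈ Ideal.span S :=
    Ideal.subset_span ⟨![0,1,2], ![3,4,5], by decide, by decide, h3.symm⟩
  have e : (1 : MvPolynomial (Fin 8) ℤ)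
      = 3 * (5 - X 2) + 1 * (3 * X 2 - 4) + 2 * (-5) := by ring
  rw [e]
  exact add_mem (add_mem (Ideal.mul_mem_left _ _ m1) (Ideal.mul_mem_left _ _ m2))
    (Ideal.mul_mem_left _ _ m3)
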